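/- arXiv:2410.06411 — 3 statements merged into one kernel-verified Lean document; each statement's English description precedes it below -/
import Mathlib

section
/- Let G be a subgroup of O(n) acting irreducibly on ℝ^n, and let a be a nonzero skew-symmetric linear transformation of ℝ^n commuting with every element of G. Then there exists λ ∈ ℝ and a linear map J with J² = -id such that a = λ·J. -/
open scoped RealInnerProductSpace

/-- If `G ⊆ O(n)` acts irreducibly on `ℝⁿ` and `a ≠ 0` is a skew-symmetric linear
transformation commuting with every element of `G`, then `a = λ • J` for some real `λ` and
some linear map `J` with `J² = -id`. -/
theorem stmt_1 (n : ℕ)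
    (G : Subgroup (EuclideanSpace ℝ (Fin n) ≃ₗᵢ[ℝ] EuclideanSpace ℝ (Fin n)))
    (hirr : ∀ W : Submodule ℝ (EuclideanSpace ℝ (Fin n)),
      (∀ g ∈ G, W.map (g : EuclideanSpace ℝ (Fin n) ≃ₗᵢ[ℝ]
        EuclideanSpace ℝ (Fin n)).toLinearIsometry.toLinearMap ≤ W) → W = ⊥ ∨ W = ⊤)
    (a : EuclideanSpace ℝ (Fin n) →ₗ[ℝ] EuclideanSpace ℝ (Fin n))
    (hskew : ∀ x y, ⟪a x, y⟫ = -⟪x, a y⟫)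
    (ha : a ≠ 0)
    (hcomm : ∀ g ∈ G, ∀ x, a (g x) = g (a x)) :
    ∃ (lam : ℝ) (J : EuclideanSpace ℝ (Fin n) →ₗ[ℝ] EuclideanSpace ℝ (Fin n)),
      J ∘ₗ J = -LinearMap.id ∧ a = lam • J := by
  -- b = -a² is symmetric
  set b : EuclideanSpace ℝ (Fin n) →ₗ[ℝ] EuclideanSpace ℝ (Fin n) := -(a ∘ₗ a) with hb
  have hbx : ∀ x, b x = -(a (a x)) := fun x => rfl
  have key : ∀ x y, ⟪b x, y⟫ = ⟪a x, a y⟫ := by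
    intro x y
    rw [hbx, inner_neg_left, hskew, neg_neg]
  have hbsymm : b.IsSymmetric := by
    intro x y
    calc ⟪b x, y⟫ = ⟪a x, a y⟫ := key x y
      _ = ⟪a y, a x⟫ := real_inner_comm _ _
      _ = ⟪b y, x⟫ := (key y x).symm
      _ = ⟪x, b y⟫ := real_inner_comm _ _
  -- a nonzero gives a nontrivial space
  obtain ⟨x0, hx0⟩ : ∃ x, a x ≠ 0 := by
    by_contra h
    push_neg at h
    exact ha (LinearMap.ext fun x => h x)
  have hx0ne : x0 ≠ 0 := fun h => hx0 (by simp [h])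
  haveI : Nontrivial (EuclideanSpace ℝ (Fin n)) := ⟨x0, 0, hx0ne⟩
  -- b has an eigenvalue μ
  obtain ⟨μ, hμ⟩ : ∃ μ : ℝ, Module.End.HasEigenvalue b μ :=
    ⟨_, hbsymm.hasEigenvalue_iSup_of_finiteDimensional⟩
  -- the eigenspace is G-invariant, hence ⊤
  have hinv : ∀ g ∈ G, (Module.End.eigenspace b μ).map
      (g : EuclideanSpace ℝ (Fin n) ≃ₗᵢ[ℝ]
        EuclideanSpace ℝ (Fin n)).toLinearIsometry.toLinearMap ≤ Module.End.eigenspace b μ := by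
    intro g hg x hx
    obtain ⟨y, hy, rfl⟩ := hx
    have hy : b y = μ • y := Module.End.mem_eigenspace_iff.mp hy
    rw [Module.End.mem_eigenspace_iff]
    have : b (g y) = g (b y) := by
      simp only [hbx]
      rw [hcomm g hg, hcomm g hg]
      simp
    show b (g y) = μ • g y
    rw [this, hy]
    simp
  have htop : Module.End.eigenspace b μ = ⊤ := by
    rcases hirr _ hinv with h | h
    · exact absurd h hμ
    · exact h
  have hbid : ∀ x, b x = μ • x := by
    intro x
    have : x ∈ Module.End.eigenspace b μ := htop ▸ Submodule.mem_top
    exact Module.End.mem_eigenspace_iff.mp this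
  -- μ > 0
  have hμpos : 0 < μ := by
    have h1 : μ * ‖x0‖ ^ 2 = ‖a x0‖ ^ 2 := by
      have := hbid x0
      have h2 : ⟪b x0, x0⟫ = μ * ‖x0‖ ^ 2 := by
        rw [this, real_inner_smul_left, real_inner_self_eq_norm_sq]
      have h3 : ⟪b x0, x0⟫ = ‖a x0‖ ^ 2 := by
        rw [hbx, inner_neg_left, hskew, neg_neg, real_inner_self_eq_norm_sq]
      linarith [h2, h3]
    have h4 : (0:ℝ) < ‖a x0‖ ^ 2 := pow_pos (norm_pos_iff.mpr hx0) 2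
    have h5 : (0:ℝ) < ‖x0‖ ^ 2 := pow_pos (norm_pos_iff.mpr hx0ne) 2
    nlinarith
  refine ⟨Real.sqrt μ, (Real.sqrt μ)⁻¹ • a, ?_, ?_⟩
  · ext x
    have hs : Real.sqrt μ ^ 2 = μ := Real.sq_sqrt hμpos.le
    have hsne : Real.sqrt μ ≠ 0 := (Real.sqrt_pos.mpr hμpos).ne'
    simp only [LinearMap.comp_apply, LinearMap.smul_apply, map_smul, LinearMap.neg_apply,
      LinearMap.id_apply]
    have : a (a x) = -(μ • x) := by
      have := hbid x; rw [hbx] at this; linear_combination (norm := module) -this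
    rw [this]
    rw [smul_smul, smul_neg, smul_smul]
    rw [show (Real.sqrt μ)⁻¹ * (Real.sqrt μ)⁻¹ * μ = 1 by
      rw [← Real.mul_self_sqrt hμpos.le]; field_simp; rw [Real.sqrt_sq (Real.sqrt_nonneg _)]]
    simp
  · ext x
    have hsne : Real.sqrt μ ≠ 0 := (Real.sqrt_pos.mpr hμpos).ne'
    simp [smul_smul, mul_inv_cancel₀ hsne]
end

section
/- Let G be a subgroup of O(n) acting irreducibly on ℝ^n, let a ≠ 0 and b be skew-symmetric linear transformations of ℝ^n commuting with every element of G, and suppose a b = b a. Then b = λ a for some real λ. -/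
open scoped RealInnerProductSpace

/-- Schur-type lemma: a symmetric operator commuting with an irreducibly acting
group is a scalar multiple of the identity. -/
lemma scalar_of_symm_comm (n : ℕ) (hn : 0 < n)
    (G : Subgroup (EuclideanSpace ℝ (Fin n) ≃ₗᵢ[ℝ] EuclideanSpace ℝ (Fin n)))
    (hirr : ∀ W : Submodule ℝ (EuclideanSpace ℝ (Fin n)),
      (∀ g ∈ G, W.map (g : EuclideanSpace ℝ (Fin n) ≃ₗᵢ[ℝ]
        EuclideanSpace ℝ (Fin n)).toLinearIsometry.toLinearMap ≤ W) → W = ⊥ ∨ W = ⊤)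
    (s : EuclideanSpace ℝ (Fin n) →ₗ[ℝ] EuclideanSpace ℝ (Fin n))
    (hs : s.IsSymmetric)
    (hscomm : ∀ g ∈ G, ∀ x, s (g x) = g (s x)) :
    ∃ μ : ℝ, s = μ • LinearMap.id := by
  haveI : NeZero n := ⟨hn.ne'⟩
  haveI : Nontrivial (EuclideanSpace ℝ (Fin n)) := by
    have : Nontrivial (Fin n → ℝ) := inferInstance
    exact inferInstance
  have hev := hs.hasEigenvalue_iSup_of_finiteDimensional
  set μ : ℝ := (⨆ x : { x : EuclideanSpace ℝ (Fin n) // x ≠ 0 },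
    RCLike.re ⟪s x, (x : EuclideanSpace ℝ (Fin n))⟫ / ‖(x : EuclideanSpace ℝ (Fin n))‖ ^ 2 : ℝ)
  refine ⟨μ, ?_⟩
  set W := Module.End.eigenspace s μ with hW
  have hWinv : ∀ g ∈ G, W.map (g : EuclideanSpace ℝ (Fin n) ≃ₗᵢ[ℝ]
      EuclideanSpace ℝ (Fin n)).toLinearIsometry.toLinearMap ≤ W := by
    intro g hg x hx
    obtain ⟨y, hy, rfl⟩ := hx
    rw [SetLike.mem_coe] at hy
    rw [hW, Module.End.mem_eigenspace_iff] at hy ⊢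
    have := hscomm g hg y
    simp only [LinearIsometryEquiv.coe_toLinearIsometry,
      LinearIsometry.coe_toLinearMap] at *
    rw [this, hy, map_smul]
  rcases hirr W hWinv with h | h
  · exact absurd h hev
  · refine LinearMap.ext fun x => ?_
    have hx : x ∈ W := h ▸ Submodule.mem_top
    rw [hW, Module.End.mem_eigenspace_iff] at hx
    simpa using hx

/-- If `G ⊆ O(n)` acts irreducibly on `ℝⁿ`, `a ≠ 0` and `b` are skew-symmetric
linear transformations commuting with every element of `G`, and `ab = ba`, then `b = λ • a`. -/
theorem stmt_2 (n : ℕ)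
    (G : Subgroup (EuclideanSpace ℝ (Fin n) ≃ₗᵢ[ℝ] EuclideanSpace ℝ (Fin n)))
    (hirr : ∀ W : Submodule ℝ (EuclideanSpace ℝ (Fin n)),
      (∀ g ∈ G, W.map (g : EuclideanSpace ℝ (Fin n) ≃ₗᵢ[ℝ]
        EuclideanSpace ℝ (Fin n)).toLinearIsometry.toLinearMap ≤ W) → W = ⊥ ∨ W = ⊤)
    (a b : EuclideanSpace ℝ (Fin n) →ₗ[ℝ] EuclideanSpace ℝ (Fin n))
    (haskew : ∀ x y, ⟪a x, y⟫ = -⟪x, a y⟫)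
    (hbskew : ∀ x y, ⟪b x, y⟫ = -⟪x, b y⟫)
    (ha : a ≠ 0)
    (hacomm : ∀ g ∈ G, ∀ x, a (g x) = g (a x))
    (hbcomm : ∀ g ∈ G, ∀ x, b (g x) = g (b x))
    (hab : a ∘ₗ b = b ∘ₗ a) :
    ∃ lam : ℝ, b = lam • a := by
  rcases Nat.eq_zero_or_pos n with hn | hn
  · exfalso
    apply ha
    subst hn
    haveI : Subsingleton (EuclideanSpace ℝ (Fin 0)) := by
      have : Subsingleton (Fin 0 → ℝ) := inferInstance
      exact inferInstance
    exact LinearMap.ext fun x => Subsingleton.elim _ _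
  -- a ∘ a is symmetric and commutes with G
  have haa_symm : (a ∘ₗ a).IsSymmetric := by
    intro x y
    simp only [LinearMap.comp_apply]
    rw [haskew, haskew]
    ring
  have haa_comm : ∀ g ∈ G, ∀ x, (a ∘ₗ a) (g x) = g ((a ∘ₗ a) x) := by
    intro g hg x
    simp only [LinearMap.comp_apply, hacomm g hg]
  obtain ⟨μ, hμ⟩ := scalar_of_symm_comm n hn G hirr (a ∘ₗ a) haa_symm haa_comm
  -- a ∘ b is symmetric and commutes with G
  have hab_symm : (a ∘ₗ b).IsSymmetric := by
    intro x y
    simp only [LinearMap.comp_apply]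
    rw [haskew, hbskew]
    have haby : a (b y) = b (a y) := by
      have := LinearMap.ext_iff.mp hab y
      simpa using this
    rw [haby]
    ring
  have hab_comm : ∀ g ∈ G, ∀ x, (a ∘ₗ b) (g x) = g ((a ∘ₗ b) x) := by
    intro g hg x
    simp only [LinearMap.comp_apply, hbcomm g hg, hacomm g hg]
  obtain ⟨ν, hν⟩ := scalar_of_symm_comm n hn G hirr (a ∘ₗ b) hab_symm hab_comm
  -- μ ≠ 0
  have hμne : μ ≠ 0 := by
    intro h
    apply ha
    refine LinearMap.ext fun x => ?_
    have h1 : (a ∘ₗ a) x = 0 := by rw [hμ, h]; simp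
    have h2 : ⟪a x, a x⟫ = 0 := by
      rw [haskew]
      simp only [LinearMap.comp_apply] at h1
      rw [h1, inner_zero_right, neg_zero]
    simpa using inner_self_eq_zero.mp h2
  refine ⟨ν / μ, ?_⟩
  refine LinearMap.ext fun x => ?_
  have h1 : a (a (b x)) = μ • b x := by
    have := congrFun (congrArg DFunLike.coe hμ) (b x)
    simpa using this
  have h2 : a (b x) = ν • x := by
    have := congrFun (congrArg DFunLike.coe hν) x
    simpa using this
  have h3 : μ • b x = ν • a x := by
    rw [← h1, h2, map_smul]
  have : b x = (ν / μ) • a x := by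
    have := congrArg (fun v => μ⁻¹ • v) h3
    simpa [smul_smul, inv_mul_cancel₀ hμne, div_eq_inv_mul, mul_comm] using this
  simpa using this
end

section
/- Let ∇ be a connection with ∇J = 0 on an almost complex manifold (M,J) whose Nijenhuis tensor vanishes (J integrable), and suppose the torsion T of ∇ satisfies J∘T = T∘(J ⊗ id) + T∘(id ⊗ J) as a derivation, i.e. J(T(X,Y)) = T(JX,Y) + T(X,JY) for all X,Y. Then T ≡ 0. -/
/-- Let `∇` be a connection with `∇J = 0` on an almost complex manifold `(M,J)`
with vanishing Nijenhuis tensor (`J` integrable), and suppose the torsion `T` satisfies the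
derivation identity `J(T(X,Y)) = T(JX,Y) + T(X,JY)` for all `X, Y`.  Then `T ≡ 0`.
The module `V` plays the role of the (real) vector fields, `L` the Lie bracket and
`D` the connection `∇`. -/
theorem stmt_12 (V : Type*) [AddCommGroup V] [Module ℝ V]
    (J : V →ₗ[ℝ] V)
    (hJ2 : ∀ X : V, J (J X) = -X)               -- J² = -id
    (L : V → V → V)                              -- Lie bracket of vector fields
    (D : V → V → V)                              -- the connection ∇
    (hDJ : ∀ X Y : V, D X (J Y) = J (D X Y))     -- ∇J = 0
    (T : V → V → V)
    (hT : ∀ X Y : V, T X Y = D X Y - D Y X - L X Y)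
    (hNij : ∀ X Y : V,                           -- Nijenhuis tensor vanishes
      L (J X) (J Y) - L X Y - J (L X (J Y)) - J (L (J X) Y) = 0)
    (hder : ∀ X Y : V, J (T X Y) = T (J X) Y + T X (J Y)) :
    ∀ X Y : V, T X Y = 0 := by
  have key : ∀ X Y : V, T (J X) (J Y) = 0 := by
    intro X Y
    have hA : J (T X Y) - T (J X) Y - T X (J Y) = 0 := by rw [hder]; abel
    have hN := hNij X Y
    calc T (J X) (J Y)
        = -J (J (T X Y) - T (J X) Y - T X (J Y))
          - (L (J X) (J Y) - L X Y - J (L X (J Y)) - J (L (J X) Y)) := by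
          simp only [hT, hDJ, map_sub, map_add, map_neg, hJ2]
          abel
      _ = 0 := by rw [hA, hN, map_zero]; abel
  intro X Y
  have h := key (-(J X)) (-(J Y))
  simp only [map_neg, hJ2, neg_neg] at h
  exact h
end
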